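/- Let c/d ∈ [0,1] be an irreducible fraction and n a positive integer. If A and B are families of subsets of {1,...,n} such that |A ∩ B| = (c/d)·|B| for every A ∈ A and B ∈ B, then |A| · |B| ≤ 2^n. -/

import Mathlib

open Finset Module

noncomputable def indvec (n : ℕ) (s : Finset (Fin n)) : EuclideanSpace ℝ (Fin n) :=
  WithLp.toLp 2 (fun i => if i ∈ s then (1 : ℝ) else 0)

noncomputable def evi (n : ℕ) (i : Fin n) : EuclideanSpace ℝ (Fin n) →ₗ[ℝ] ℝ where
  toFun x := x i
  map_add' _ _ := rfl
  map_smul' _ _ := rfl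

lemma inner_indvec (n : ℕ) (a b : Finset (Fin n)) :
    (inner ℝ (indvec n a) (indvec n b) : ℝ) = ((a ∩ b).card : ℝ) := by
  classical
  rw [PiLp.inner_apply]
  simp only [indvec, RCLike.inner_apply, conj_trivial, ite_mul, one_mul, zero_mul]
  rw [Finset.sum_ite_mem]
  simp [Finset.inter_comm a b]

lemma card_le_pow_finrank {n : ℕ} (U : Finset (Fin n)) (S : Finset (Finset (Fin n)))
    (W : Submodule ℝ (EuclideanSpace ℝ (Fin n)))
    (hU : ∀ s ∈ S, s ⊆ U)
    (hW : ∀ s ∈ S, ∀ t ∈ S, indvec n s - indvec n t ∈ W) :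
    S.card ≤ 2 ^ Module.finrank ℝ W := by
  classical
  induction U using Finset.induction_on generalizing S W with
  | empty =>
    have hsub : S ⊆ {∅} := by
      intro s hs
      simp [Finset.subset_empty.mp (hU s hs)]
    calc S.card ≤ 1 := by simpa using Finset.card_le_card hsub
      _ ≤ 2 ^ Module.finrank ℝ W := Nat.one_le_two_pow
  | @insert i U hiU ih =>
    set S0 : Finset (Finset (Fin n)) := S.filter (fun s => i ∉ s) with hS0
    set S1' : Finset (Finset (Fin n)) := S.filter (fun s => i ∈ s) with hS1'
    set S1 : Finset (Finset (Fin n)) := S1'.image (fun s => s.erase i) with hS1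
    set W0 : Submodule ℝ (EuclideanSpace ℝ (Fin n)) := W ⊓ LinearMap.ker (evi n i) with hW0
    have hcard : S.card = S0.card + S1.card := by
      have h1 : S1'.card = S1.card := by
        rw [hS1]
        rw [Finset.card_image_of_injOn]
        intro s hs t ht hst
        have hsi : i ∈ s := (Finset.mem_filter.mp hs).2
        have hti : i ∈ t := (Finset.mem_filter.mp ht).2
        rw [← Finset.insert_erase hsi, ← Finset.insert_erase hti]
        exact congrArg (insert i) hst
      rw [← h1, hS0, hS1', add_comm]
      exact (Finset.card_filter_add_card_filter_not (p := fun s => i ∈ s)).symm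
    -- membership facts
    have hmem0 : ∀ s ∈ S0, s ∈ S ∧ i ∉ s := fun s hs => Finset.mem_filter.mp hs
    have hmem1 : ∀ s ∈ S1', s ∈ S ∧ i ∈ s := fun s hs => Finset.mem_filter.mp hs
    have hind_at : ∀ (s : Finset (Fin n)), i ∉ s → indvec n s i = 0 := by
      intro s hsi; simp [indvec, hsi]
    have hind_at' : ∀ (s : Finset (Fin n)), i ∈ s → indvec n s i = 1 := by
      intro s hsi; simp [indvec, hsi]
    -- erased indicator difference
    have herase : ∀ s t : Finset (Fin n), i ∈ s → i ∈ t →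
        indvec n (s.erase i) - indvec n (t.erase i) = indvec n s - indvec n t := by
      intro s t hs ht
      ext j
      by_cases hj : j = i
      · subst hj
        show indvec n (s.erase j) j - indvec n (t.erase j) j
            = indvec n s j - indvec n t j
        rw [hind_at _ (Finset.notMem_erase j s), hind_at _ (Finset.notMem_erase j t),
          hind_at' _ hs, hind_at' _ ht]
        norm_num
      · show indvec n (s.erase i) j - indvec n (t.erase i) j = indvec n s j - indvec n t j
        simp [indvec, Finset.mem_erase, hj]
    -- hypotheses for S0
    have hU0 : ∀ s ∈ S0, s ⊆ U := by
      intro s hs j hj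
      rcases Finset.mem_insert.mp (hU s (hmem0 s hs).1 hj) with h | h
      · exact absurd (h ▸ hj) (hmem0 s hs).2
      · exact h
    have hW0' : ∀ s ∈ S0, ∀ t ∈ S0, indvec n s - indvec n t ∈ W0 := by
      intro s hs t ht
      refine Submodule.mem_inf.mpr ⟨hW s (hmem0 s hs).1 t (hmem0 t ht).1, ?_⟩
      rw [LinearMap.mem_ker]
      show indvec n s i - indvec n t i = 0
      rw [hind_at _ (hmem0 s hs).2, hind_at _ (hmem0 t ht).2, sub_zero]
    -- hypotheses for S1
    have hU1 : ∀ s ∈ S1, s ⊆ U := by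
      intro s hs
      rcases Finset.mem_image.mp hs with ⟨t, ht, rfl⟩
      intro j hj
      have hji : j ≠ i := Finset.ne_of_mem_erase hj
      rcases Finset.mem_insert.mp (hU t (hmem1 t ht).1 (Finset.mem_of_mem_erase hj)) with h | h
      · exact absurd h hji
      · exact h
    have hW1' : ∀ s ∈ S1, ∀ t ∈ S1, indvec n s - indvec n t ∈ W0 := by
      intro s hs t ht
      rcases Finset.mem_image.mp hs with ⟨s', hs', rfl⟩
      rcases Finset.mem_image.mp ht with ⟨t', ht', rfl⟩
      rw [herase s' t' (hmem1 s' hs').2 (hmem1 t' ht').2]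
      refine Submodule.mem_inf.mpr ⟨hW s' (hmem1 s' hs').1 t' (hmem1 t' ht').1, ?_⟩
      rw [LinearMap.mem_ker]
      show indvec n s' i - indvec n t' i = 0
      rw [hind_at' _ (hmem1 s' hs').2, hind_at' _ (hmem1 t' ht').2, sub_self]
    have hb0 := ih S0 W0 hU0 hW0'
    have hb1 := ih S1 W0 hU1 hW1'
    have hW0W : finrank ℝ W0 ≤ finrank ℝ W :=
      Submodule.finrank_mono inf_le_left
    rcases Finset.eq_empty_or_nonempty S0 with h0 | h0
    · rw [hcard, h0, Finset.card_empty, zero_add]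
      exact hb1.trans (Nat.pow_le_pow_right (by norm_num) hW0W)
    rcases Finset.eq_empty_or_nonempty S1' with h1 | h1
    · have : S1 = ∅ := by rw [hS1, h1]; simp
      rw [hcard, this, Finset.card_empty, add_zero]
      exact hb0.trans (Nat.pow_le_pow_right (by norm_num) hW0W)
    -- both nonempty: rank drops
    obtain ⟨s0, hs0⟩ := h0
    obtain ⟨s1, hs1⟩ := h1
    have hwmem : indvec n s1 - indvec n s0 ∈ W :=
      hW s1 (hmem1 s1 hs1).1 s0 (hmem0 s0 hs0).1
    have hwval : evi n i (indvec n s1 - indvec n s0) = 1 := by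
      show indvec n s1 i - indvec n s0 i = 1
      rw [hind_at' _ (hmem1 s1 hs1).2, hind_at _ (hmem0 s0 hs0).2, sub_zero]
    set f : W →ₗ[ℝ] ℝ := (evi n i).comp W.subtype with hf
    have hfval : f (⟨indvec n s1 - indvec n s0, hwmem⟩ : W) = 1 := hwval
    have hrange : LinearMap.range f = ⊤ := by
      rw [← top_le_iff]
      intro x _
      have : x • (1 : ℝ) ∈ LinearMap.range f := by
        have h1 : (1 : ℝ) ∈ LinearMap.range f := ⟨_, hfval⟩
        exact Submodule.smul_mem _ x h1
      simpa using this
    have hker : finrank ℝ (LinearMap.ker f) + 1 = finrank ℝ W := by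
      have := LinearMap.finrank_range_add_finrank_ker f
      rw [hrange, finrank_top] at this
      rw [add_comm]
      simpa using this
    have hmap : (LinearMap.ker f).map W.subtype = W0 := by
      rw [hf, LinearMap.ker_comp, Submodule.map_comap_subtype]
    have hfr0 : finrank ℝ W0 = finrank ℝ (LinearMap.ker f) := by
      rw [← hmap, Submodule.finrank_map_subtype_eq]
    rw [hcard]
    calc S0.card + S1.card ≤ 2 ^ finrank ℝ W0 + 2 ^ finrank ℝ W0 := Nat.add_le_add hb0 hb1
      _ = 2 ^ (finrank ℝ W0 + 1) := by ring
      _ = 2 ^ finrank ℝ W := by rw [hfr0, hker]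

theorem frac_cross_upper (n c d : ℕ) (hn : 0 < n) (hd : 0 < d) (hcd : c ≤ d)
    (hcop : Nat.Coprime c d)
    (A B : Finset (Finset (Fin n)))
    (hcross : ∀ a ∈ A, ∀ b ∈ B, d * (a ∩ b).card = c * b.card) :
    A.card * B.card ≤ 2 ^ n := by
  classical
  set W : Submodule ℝ (EuclideanSpace ℝ (Fin n)) :=
    Submodule.span ℝ (indvec n '' (B : Set (Finset (Fin n)))) with hWdef
  have hBbound : B.card ≤ 2 ^ finrank ℝ W := by
    apply card_le_pow_finrank Finset.univ B W (fun s _ => Finset.subset_univ s)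
    intro s hs t ht
    exact Submodule.sub_mem _
      (Submodule.subset_span ⟨s, hs, rfl⟩)
      (Submodule.subset_span ⟨t, ht, rfl⟩)
  have hAbound : A.card ≤ 2 ^ finrank ℝ Wᗮ := by
    apply card_le_pow_finrank Finset.univ A Wᗮ (fun s _ => Finset.subset_univ s)
    intro a ha a' ha'
    rw [Submodule.mem_orthogonal']
    intro u hu
    induction hu using Submodule.span_induction with
    | mem x hx =>
      rcases hx with ⟨b, hb, rfl⟩
      rw [inner_sub_left, inner_indvec, inner_indvec]
      have h1 : d * (a ∩ b).card = d * (a' ∩ b).card := by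
        rw [hcross a ha b hb, hcross a' ha' b hb]
      have h2 : (a ∩ b).card = (a' ∩ b).card :=
        Nat.eq_of_mul_eq_mul_left hd h1
      rw [h2, sub_self]
    | zero => rw [inner_zero_right]
    | add x y _ _ hx hy => rw [inner_add_right, hx, hy, add_zero]
    | smul c x _ hx => rw [inner_smul_right, hx, mul_zero]
  have hsum : finrank ℝ Wᗮ + finrank ℝ W = n := by
    have := Submodule.finrank_add_finrank_orthogonal W
    rw [finrank_euclideanSpace, Fintype.card_fin] at this
    omega
  calc A.card * B.card ≤ 2 ^ finrank ℝ Wᗮ * 2 ^ finrank ℝ W :=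
        Nat.mul_le_mul hAbound hBbound
    _ = 2 ^ (finrank ℝ Wᗮ + finrank ℝ W) := (pow_add 2 _ _).symm
    _ = 2 ^ n := by rw [hsum]
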